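/- Let N be a binary tree-based rooted phylogenetic network. Then every connected component of the bipartite graph J_N is either (i) a cycle, (ii) a path whose two end vertices are tree vertices of N neither of which is an omnian, or (iii) a path whose two end vertices are tree vertices of N exactly one of which is an omnian. -/

import Mathlib

open Relation

/-- Out-degree of a vertex in a digraph given by its arc relation. -/
noncomputable def outDeg {V : Type*} (A : V → V → Prop) (v : V) : ℕ := {u | A v u}.ncard
/-- In-degree of a vertex in a digraph given by its arc relation. -/
noncomputable def inDeg {V : Type*} (A : V → V → Prop) (v : V) : ℕ := {u | A u v}.ncard

/-- A rooted phylogenetic network on leaf set `X`. -/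
structure PhyloNet (V : Type*) [Fintype V] [DecidableEq V] where
  Arc : V → V → Prop
  root : V
  X : Finset V
  acyclic : ∀ v, ¬ Relation.TransGen Arc v v
  reach : ∀ v, Relation.ReflTransGen Arc root v
  root_out : 1 ≤ outDeg Arc root
  leaf_iff : ∀ v, v ∈ X ↔ outDeg Arc v = 0
  leaf_in : ∀ v ∈ X, inDeg Arc v = 1
  internal : ∀ v, v ≠ root → v ∉ X →
    (inDeg Arc v = 1 ∧ 2 ≤ outDeg Arc v) ∨ (2 ≤ inDeg Arc v ∧ outDeg Arc v = 1)

section Defs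
variable {V : Type*} [Fintype V] [DecidableEq V]

/-- A reticulation: in-degree at least two. -/
def IsRetic (N : PhyloNet V) (v : V) : Prop := 2 ≤ inDeg N.Arc v
/-- A tree vertex: a non-leaf vertex of in-degree at most one. -/
def IsTreeVert (N : PhyloNet V) (v : V) : Prop := v ∉ N.X ∧ inDeg N.Arc v ≤ 1
/-- An omnian: a non-leaf vertex all of whose children are reticulations. -/
def IsOmnian (N : PhyloNet V) (v : V) : Prop := v ∉ N.X ∧ ∀ u, N.Arc v u → IsRetic N u
/-- A binary network: all in- and out-degrees are at most two. -/
def IsBinary (N : PhyloNet V) : Prop := ∀ v : V, inDeg N.Arc v ≤ 2 ∧ outDeg N.Arc v ≤ 2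

/-- A rooted spanning tree of `N` with the same root as `N`. -/
def IsRSTree (N : PhyloNet V) (T : V → V → Prop) : Prop :=
  (∀ u v, T u v → N.Arc u v) ∧ (∀ v, inDeg T v = 0 ↔ v = N.root) ∧
  (∀ v, v ≠ N.root → inDeg T v = 1)

/-- A support tree: a rooted spanning tree with the same root, all of whose leaves are in `X`. -/
def IsSupportTree (N : PhyloNet V) (T : V → V → Prop) : Prop :=
  IsRSTree N T ∧ ∀ v, outDeg T v = 0 → v ∈ N.X

/-- Tree-based network. -/
def TreeBased (N : PhyloNet V) : Prop := ∃ T, IsSupportTree N T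

/-- A (nonempty, repetition-free) directed path recorded as a list of vertices. -/
def IsPathIn (A : V → V → Prop) (p : List V) : Prop := p ≠ [] ∧ p.Chain' A ∧ p.Nodup
/-- The path ends at a vertex of `X`. -/
def EndsIn (X : Finset V) (p : List V) : Prop := ∃ x ∈ X, p.getLast? = some x
/-- Pairwise vertex-disjoint family of paths. -/
def PairwiseDisj (P : Finset (List V)) : Prop :=
  ∀ p ∈ P, ∀ q ∈ P, p ≠ q → ∀ v : V, v ∈ p → v ∉ q
/-- A partition of the vertex set of `N` into vertex-disjoint directed paths
ending at leaves in `X`. -/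
def IsPathPartition (N : PhyloNet V) (P : Finset (List V)) : Prop :=
  (∀ p ∈ P, IsPathIn N.Arc p ∧ EndsIn N.X p) ∧ PairwiseDisj P ∧ ∀ v : V, ∃ p ∈ P, v ∈ p

/-- A matching in the bipartite graph with edge set `E` (edges from a first copy of `V`
to a second copy of `V`), recorded as a set of edges no two of which share an endpoint. -/
def IsMatchingOn (E : V → V → Prop) (M : Finset (V × V)) : Prop :=
  (∀ e ∈ M, E e.1 e.2) ∧ ∀ e ∈ M, ∀ f ∈ M, (e.1 = f.1 ∨ e.2 = f.2) → e = f

/-- Size of a maximum matching of the bipartite graph with edge set `E`. -/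
noncomputable def maxMatching (E : V → V → Prop) : ℕ :=
  sSup {n | ∃ M : Finset (V × V), IsMatchingOn E M ∧ M.card = n}

/-- An antichain of vertices of `N`. -/
def AntichainIn (N : PhyloNet V) (S : Finset V) : Prop :=
  ∀ u ∈ S, ∀ v ∈ S, u ≠ v → ¬ Relation.TransGen N.Arc u v

/-- The antichain-to-leaf property: from every antichain there are pairwise
vertex-disjoint directed paths to leaves, one starting at each antichain element. -/
def AntichainToLeaf (N : PhyloNet V) : Prop :=
  ∀ S : Finset V, AntichainIn N S →
    ∃ f : V → List V,
      (∀ s ∈ S, IsPathIn N.Arc (f s) ∧ (f s).head? = some s ∧ EndsIn N.X (f s)) ∧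
      ∀ s ∈ S, ∀ t ∈ S, s ≠ t → ∀ v : V, v ∈ f s → v ∉ f t

/-- A temporal network: a real labelling strictly increasing along tree arcs and
constant along reticulation arcs. -/
def Temporal (N : PhyloNet V) : Prop :=
  ∃ l : V → ℝ, ∀ u v, N.Arc u v →
    (IsRetic N v → l u = l v) ∧ (¬ IsRetic N v → l u < l v)

/-- `N'` is a binary refinement of `N`, witnessed by the contraction map `φ`:
`N` is obtained from the binary network `N'` by contracting the arcs whose endpoints
are identified by `φ`. -/
def IsBinRefinement {V' : Type*} [Fintype V'] [DecidableEq V']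
    (N' : PhyloNet V') (N : PhyloNet V) (φ : V' → V) : Prop :=
  IsBinary N' ∧ Function.Surjective φ ∧ φ N'.root = N.root ∧
  N'.X.image φ = N.X ∧ Set.InjOn φ ↑N'.X ∧
  (∀ u v : V, N.Arc u v ↔ ∃ u' v', φ u' = u ∧ φ v' = v ∧ N'.Arc u' v' ∧ φ u' ≠ φ v') ∧
  (∀ a b : V', φ a = φ b →
    Relation.ReflTransGen (fun x y => (N'.Arc x y ∨ N'.Arc y x) ∧ φ x = φ y) a b)

/-- Edge of the bipartite graph `B_N` between omnians and reticulations. -/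
def BEdge (N : PhyloNet V) (o r : V) : Prop := IsOmnian N o ∧ IsRetic N r ∧ N.Arc o r
/-- Edge of the bipartite graph `Z_N` between tree vertices with a reticulation child
and reticulations. -/
def ZEdge (N : PhyloNet V) (t r : V) : Prop :=
  IsTreeVert N t ∧ (∃ r', N.Arc t r' ∧ IsRetic N r') ∧ IsRetic N r ∧ N.Arc t r

/-- `R_t`: reticulations with no reticulation parent. -/
def Rt (N : PhyloNet V) (v : V) : Prop := IsRetic N v ∧ ∀ u, N.Arc u v → ¬ IsRetic N u
/-- `Q_t`: vertices with a child in `R_t`. -/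
def Qt (N : PhyloNet V) (v : V) : Prop := ∃ r, N.Arc v r ∧ Rt N r
/-- Edge of the bipartite graph `J_N`. -/
def JEdge (N : PhyloNet V) (q r : V) : Prop := Qt N q ∧ Rt N r ∧ N.Arc q r

/-- A supporting set for `J_N`. -/
def IsSupportingSet (N : PhyloNet V) (E : Finset (V × V)) : Prop :=
  (∀ e ∈ E, JEdge N e.1 e.2) ∧
  (∀ q, Qt N q → IsOmnian N q → ∃ e ∈ E, e.1 = q) ∧
  (∀ r, Rt N r → ∃! e : V × V, e ∈ E ∧ e.2 = r)

/-- An arboreal arc: `u` is a reticulation, or `v` is a tree vertex or a leaf. -/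
def ArborealArc (N : PhyloNet V) (u v : V) : Prop :=
  N.Arc u v ∧ (IsRetic N u ∨ ¬ IsRetic N v)

/-- The number of support trees of `N`, identified with their arc sets. -/
noncomputable def supCount (N : PhyloNet V) : ℕ :=
  {A' : Finset (V × V) | IsSupportTree N (fun u v => (u, v) ∈ A')}.ncard

/-- The bipartite graph `J_N`, as a simple graph on `Q_t ∪ R_t`. -/
def Jgraph (N : PhyloNet V) : SimpleGraph {v : V // Qt N v ∨ Rt N v} where
  Adj a b := JEdge N a.1 b.1 ∨ JEdge N b.1 a.1
  symm := ⟨by intro a b h; tauto⟩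
  loopless := ⟨by
    rintro a (⟨_, _, h⟩ | ⟨_, _, h⟩) <;> exact N.acyclic _ (Relation.TransGen.single h)⟩

/-- Degree in `J_N`. -/
noncomputable def Jdeg (N : PhyloNet V) (a : {v : V // Qt N v ∨ Rt N v}) : ℕ :=
  ((Jgraph N).neighborSet a).ncard

end Defs

/-- A rooted tree (equivalently, a subdivision of a rooted tree): a rooted digraph
in which every non-root vertex has in-degree one and everything is reachable
from the root. -/
structure RootedDirTree (V : Type*) [Fintype V] [DecidableEq V] where
  Arc : V → V → Prop
  root : V
  acyclic : ∀ v, ¬ Relation.TransGen Arc v v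
  reach : ∀ v, Relation.ReflTransGen Arc root v
  root_in : inDeg Arc root = 0
  in_one : ∀ v, v ≠ root → inDeg Arc v = 1
section Helpers
variable {V : Type*} [Fintype V] [DecidableEq V] {N : PhyloNet V}

lemma outDeg_ne_zero_of_arc {u v : V} (h : N.Arc u v) : outDeg N.Arc u ≠ 0 := by
  intro h0
  rw [outDeg, Set.ncard_eq_zero (Set.toFinite _)] at h0
  exact absurd h0 (Set.nonempty_iff_ne_empty.mp ⟨v, h⟩)

lemma not_leaf_of_arc {u v : V} (h : N.Arc u v) : u ∉ N.X := fun hx =>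
  outDeg_ne_zero_of_arc h ((N.leaf_iff u).mp hx)

lemma inDeg_root_eq (N : PhyloNet V) : inDeg N.Arc N.root = 0 := by
  rw [inDeg, Set.ncard_eq_zero (Set.toFinite _)]
  ext u
  simp only [Set.mem_setOf_eq, Set.mem_empty_iff_false, iff_false]
  intro h
  exact N.acyclic N.root (Relation.TransGen.tail' (N.reach u) h)

lemma retic_ne_root {v : V} (h : IsRetic N v) : v ≠ N.root := by
  intro e
  rw [IsRetic, e, inDeg_root_eq] at h
  omega

lemma retic_outDeg {v : V} (h : IsRetic N v) : outDeg N.Arc v = 1 := by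
  have hx : v ∉ N.X := fun hx => by
    have := N.leaf_in v hx; rw [IsRetic, this] at h; omega
  rcases N.internal v (retic_ne_root h) hx with ⟨h1, _⟩ | ⟨_, h2⟩
  · rw [IsRetic, h1] at h; omega
  · exact h2

lemma qt_not_retic {q : V} (h : Qt N q) : ¬ IsRetic N q := by
  obtain ⟨r, har, hr⟩ := h; exact hr.2 q har

lemma qt_not_leaf {q : V} (h : Qt N q) : q ∉ N.X := by
  obtain ⟨r, har, _⟩ := h; exact not_leaf_of_arc har

lemma rt_not_qt {r : V} (h : Rt N r) : ¬ Qt N r := by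
  rintro ⟨c, hrc, hc⟩
  exact hc.2 r hrc h.1

lemma retic_inDeg (hb : IsBinary N) {r : V} (h : IsRetic N r) : inDeg N.Arc r = 2 :=
  le_antisymm (hb r).1 h

lemma jadj_iff_of_Rt {a b : {v : V // Qt N v ∨ Rt N v}} (ha : Rt N a.1) :
    (Jgraph N).Adj a b ↔ N.Arc b.1 a.1 := by
  constructor
  · rintro (⟨hq, _, _⟩ | ⟨_, _, h⟩)
    · exact absurd hq (rt_not_qt ha)
    · exact h
  · intro h
    exact Or.inr ⟨⟨a.1, h, ha⟩, ha, h⟩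

lemma jadj_iff_of_Qt {a b : {v : V // Qt N v ∨ Rt N v}} (ha : Qt N a.1) :
    (Jgraph N).Adj a b ↔ N.Arc a.1 b.1 ∧ Rt N b.1 := by
  constructor
  · rintro (⟨_, hr, h⟩ | ⟨_, hr, _⟩)
    · exact ⟨h, hr⟩
    · exact absurd ha (rt_not_qt hr)
  · rintro ⟨h1, h2⟩; exact Or.inl ⟨ha, h2, h1⟩

lemma jdeg_of_Rt (hb : IsBinary N) {a : {v : V // Qt N v ∨ Rt N v}} (ha : Rt N a.1) :
    Jdeg N a = 2 := by
  have himg : Subtype.val '' ((Jgraph N).neighborSet a) = {u | N.Arc u a.1} := by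
    ext u
    simp only [Set.mem_image, Set.mem_setOf_eq]
    constructor
    · rintro ⟨b, hb', rfl⟩; exact (jadj_iff_of_Rt ha).mp hb'
    · intro h
      exact ⟨⟨u, Or.inl ⟨a.1, h, ha⟩⟩, (jadj_iff_of_Rt ha).mpr h, rfl⟩
  have hinj := Set.ncard_image_of_injective ((Jgraph N).neighborSet a) Subtype.val_injective
  rw [Jdeg, ← hinj, himg]
  exact retic_inDeg hb ha.1

lemma jdeg_of_Qt_eq {a : {v : V // Qt N v ∨ Rt N v}} (ha : Qt N a.1) :
    Jdeg N a = {u | N.Arc a.1 u ∧ Rt N u}.ncard := by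
  have himg : Subtype.val '' ((Jgraph N).neighborSet a) = {u | N.Arc a.1 u ∧ Rt N u} := by
    ext u
    simp only [Set.mem_image, Set.mem_setOf_eq]
    constructor
    · rintro ⟨b, hb', rfl⟩; exact (jadj_iff_of_Qt ha).mp hb'
    · rintro ⟨h1, h2⟩
      exact ⟨⟨u, Or.inr h2⟩, (jadj_iff_of_Qt ha).mpr ⟨h1, h2⟩, rfl⟩
  rw [Jdeg, ← Set.ncard_image_of_injective ((Jgraph N).neighborSet a) Subtype.val_injective, himg]

lemma jdeg_of_Qt_pos {a : {v : V // Qt N v ∨ Rt N v}} (ha : Qt N a.1) :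
    1 ≤ Jdeg N a := by
  rw [jdeg_of_Qt_eq ha]
  obtain ⟨r, har, hr⟩ := ha
  have : ({r} : Set V) ⊆ {u | N.Arc a.1 u ∧ Rt N u} := by
    simp only [Set.singleton_subset_iff, Set.mem_setOf_eq]; exact ⟨har, hr⟩
  simpa using Set.ncard_le_ncard this (Set.toFinite _)

lemma jdeg_of_Qt_le (hb : IsBinary N) {a : {v : V // Qt N v ∨ Rt N v}} (ha : Qt N a.1) :
    Jdeg N a ≤ 2 := by
  rw [jdeg_of_Qt_eq ha]
  calc {u | N.Arc a.1 u ∧ Rt N u}.ncard ≤ {u | N.Arc a.1 u}.ncard :=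
        Set.ncard_le_ncard (fun u h => h.1) (Set.toFinite _)
    _ ≤ 2 := (hb a.1).2

lemma omnian_of_jdeg_two (hb : IsBinary N) {a : {v : V // Qt N v ∨ Rt N v}}
    (ha : Qt N a.1) (h2 : Jdeg N a = 2) : IsOmnian N a.1 := by
  rw [jdeg_of_Qt_eq ha] at h2
  have hsub : {u | N.Arc a.1 u ∧ Rt N u} ⊆ {u | N.Arc a.1 u} := fun u h => h.1
  have heq : {u | N.Arc a.1 u ∧ Rt N u} = {u | N.Arc a.1 u} :=
    Set.eq_of_subset_of_ncard_le hsub (by rw [h2]; exact (hb a.1).2) (Set.toFinite _)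
  refine ⟨qt_not_leaf ha, fun u hu => ?_⟩
  have : u ∈ {u | N.Arc a.1 u ∧ Rt N u} := heq ▸ hu
  exact this.2.1

end Helpers

section Helpers2
variable {V : Type*} [Fintype V] [DecidableEq V] {N : PhyloNet V}

lemma T_parent_unique {T : V → V → Prop} (hT : IsSupportTree N T) {v p q : V}
    (hv : v ≠ N.root) (hp : T p v) (hq : T q v) : p = q := by
  have h1 := hT.1.2.2 v hv
  rw [inDeg, Set.ncard_eq_one] at h1
  obtain ⟨w, hw⟩ := h1
  have e1 : p ∈ ({w} : Set V) := hw ▸ hp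
  have e2 : q ∈ ({w} : Set V) := hw ▸ hq
  simp only [Set.mem_singleton_iff] at e1 e2
  rw [e1, e2]

lemma exists_T_child {T : V → V → Prop} (hT : IsSupportTree N T) {v : V}
    (hv : v ∉ N.X) : ∃ c, T v c := by
  by_contra h
  push_neg at h
  have h0 : outDeg T v = 0 := by
    rw [outDeg, Set.ncard_eq_zero (Set.toFinite _)]
    ext u; simp [h u]
  exact hv (hT.2 v h0)

lemma omnian_T_arc {T : V → V → Prop} (hT : IsSupportTree N T) {q : V}
    (hq : Qt N q) (ho : IsOmnian N q) : ∃ r, Rt N r ∧ N.Arc q r ∧ T q r := by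
  obtain ⟨c, hc⟩ := exists_T_child hT ho.1
  have hqc : N.Arc q c := hT.1.1 q c hc
  have hcret : IsRetic N c := ho.2 c hqc
  refine ⟨c, ⟨hcret, ?_⟩, hqc, hc⟩
  intro p hpc hpret
  have hpout : outDeg N.Arc p = 1 := retic_outDeg hpret
  obtain ⟨c', hc'⟩ := exists_T_child hT (not_leaf_of_arc hpc)
  have hc'c : c' = c := by
    rw [outDeg, Set.ncard_eq_one] at hpout
    obtain ⟨w, hw⟩ := hpout
    have e1 : c' ∈ ({w} : Set V) := hw ▸ (hT.1.1 p c' hc')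
    have e2 : c ∈ ({w} : Set V) := hw ▸ hpc
    simp only [Set.mem_singleton_iff] at e1 e2
    rw [e1, e2]
  have hpq : p = q := T_parent_unique hT (retic_ne_root hcret) (hc'c ▸ hc') hc
  exact (qt_not_retic hq) (hpq ▸ hpret)

end Helpers2

section WalkHelpers
open SimpleGraph

lemma walk_prefix {W : Type*} {G : SimpleGraph W}
    (hG : ∀ v y z w, G.Adj v y → G.Adj v z → G.Adj v w → y = z ∨ y = w ∨ z = w)
    {u b : W} (p : G.Walk u b) :
    ∀ {c : W} (q : G.Walk u c) (x : W), p.IsPath → q.IsPath →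
      x ∉ p.support.tail → x ∉ q.support.tail →
      (∀ y z, G.Adj u y → G.Adj u z → y ≠ x → z ≠ x → y = z) →
      p.support <+: q.support ∨ q.support <+: p.support := by
  induction p with
  | nil =>
    intro c q x _ _ _ _ _
    left
    rw [Walk.support_nil, q.support_eq_cons]
    exact ⟨q.support.tail, rfl⟩
  | @cons u y b hadj p ih =>
    intro c q x hp hq hxp hxq huniq
    cases q with
    | nil =>
      right
      rw [Walk.support_nil, (Walk.cons hadj p).support_eq_cons]
      exact ⟨(Walk.cons hadj p).support.tail, rfl⟩
    | @cons _ z _ hadj2 q' =>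
      have hyx : y ≠ x := by
        intro e
        apply hxp
        rw [Walk.support_cons, List.tail_cons, ← e]
        exact p.start_mem_support
      have hzx : z ≠ x := by
        intro e
        apply hxq
        rw [Walk.support_cons, List.tail_cons, ← e]
        exact q'.start_mem_support
      have hyz : y = z := huniq y z hadj hadj2 hyx hzx
      subst hyz
      have hp' : p.IsPath := (Walk.cons_isPath_iff _ _).mp hp |>.1
      have hq' : q'.IsPath := (Walk.cons_isPath_iff _ _).mp hq |>.1
      have hup : u ∉ p.support := ((Walk.cons_isPath_iff _ _).mp hp).2
      have huq : u ∉ q'.support := ((Walk.cons_isPath_iff _ _).mp hq).2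
      have hcond : ∀ y' z', G.Adj y y' → G.Adj y z' → y' ≠ u → z' ≠ u → y' = z' := by
        intro y' z' h1 h2 hn1 hn2
        rcases hG y y' z' u h1 h2 hadj.symm with h | h | h
        · exact h
        · exact absurd h hn1
        · exact absurd h hn2
      have := ih q' u hp' hq'
        (fun hm => hup (List.mem_of_mem_tail hm))
        (fun hm => huq (List.mem_of_mem_tail hm)) hcond
      rcases this with h | h
      · left
        rw [Walk.support_cons, Walk.support_cons]
        exact (List.cons_prefix_cons).mpr ⟨rfl, h⟩
      · right
        rw [Walk.support_cons, Walk.support_cons]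
        exact (List.cons_prefix_cons).mpr ⟨rfl, h⟩

lemma interior_two_nbrs {W : Type*} {G : SimpleGraph W} {u v b : W} (q : G.Walk u v)
    (hq : q.IsPath) (hb : b ∈ q.support) (hbu : b ≠ u) (hbv : b ≠ v) :
    ∃ y z, y ≠ z ∧ G.Adj b y ∧ G.Adj b z := by
  obtain ⟨s, t, hst⟩ := List.append_of_mem hb
  have hs : s ≠ [] := by
    rintro rfl
    rw [List.nil_append] at hst
    have h := q.support_eq_cons
    rw [hst] at h
    injection h with h1 _
    exact hbu h1
  have ht : t ≠ [] := by
    rintro rfl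
    have h : (s ++ [b]).getLast? = some v := by
      rw [← hst, List.getLast?_eq_getLast q.support_ne_nil, q.getLast_support]
    rw [List.getLast?_concat] at h
    injection h with h1
    exact hbv h1
  have hch : List.Chain' G.Adj (s ++ b :: t) := hst ▸ q.isChain_adj_support
  obtain ⟨hch1, hch2, hch3⟩ := List.isChain_append.mp hch
  refine ⟨s.getLast hs, t.head ht, ?_, ?_, ?_⟩
  · have hnd : (s ++ b :: t).Nodup := hst ▸ hq.support_nodup
    have hdisj := (List.nodup_append.mp hnd).2.2
    intro e
    exact hdisj _ (s.getLast_mem hs) _ (List.mem_cons_of_mem _ (t.head_mem ht)) e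
  · exact (hch3 (s.getLast hs) (List.getLast?_eq_getLast hs) b rfl).symm
  · cases t with
    | nil => exact absurd rfl ht
    | cons z t' => exact List.isChain_cons_cons.mp hch2 |>.1

end WalkHelpers

/-- in a binary tree-based network, every connected component of `J_N`
is a cycle (all degrees two), or a path whose two end vertices are non-omnian tree
vertices, or a path whose end vertices are tree vertices exactly one of which is an omnian. -/
theorem stmt18 {V : Type*} [Fintype V] [DecidableEq V] (N : PhyloNet V)
    (hb : IsBinary N) (ht : TreeBased N) :
    ∀ C : (Jgraph N).ConnectedComponent,
      (∀ a ∈ C.supp, Jdeg N a = 2) ∨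
      (∃ a b, a ∈ C.supp ∧ b ∈ C.supp ∧ a ≠ b ∧
        (∀ v ∈ C.supp, Jdeg N v ≤ 2) ∧ Jdeg N a = 1 ∧ Jdeg N b = 1 ∧
        (∀ v ∈ C.supp, Jdeg N v = 1 → v = a ∨ v = b) ∧
        a.1 ∉ N.X ∧ ¬ IsRetic N a.1 ∧ b.1 ∉ N.X ∧ ¬ IsRetic N b.1 ∧
        ((¬ IsOmnian N a.1 ∧ ¬ IsOmnian N b.1) ∨
         (IsOmnian N a.1 ∧ ¬ IsOmnian N b.1) ∨
         (¬ IsOmnian N a.1 ∧ IsOmnian N b.1))) := by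

  classical
  obtain ⟨T, hT⟩ := ht
  intro C
  haveI : Fintype {v : V // Qt N v ∨ Rt N v} := Fintype.ofFinite _
  -- degree bounds
  have hdeg_le : ∀ a : {v : V // Qt N v ∨ Rt N v}, Jdeg N a ≤ 2 := by
    intro a
    rcases a.2 with h | h
    · exact jdeg_of_Qt_le hb h
    · exact le_of_eq (jdeg_of_Rt hb h)
  have hG3 : ∀ v y z w : {v : V // Qt N v ∨ Rt N v},
      (Jgraph N).Adj v y → (Jgraph N).Adj v z → (Jgraph N).Adj v w →
      y = z ∨ y = w ∨ z = w := by
    intro v y z w h1 h2 h3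
    by_contra hc
    push_neg at hc
    obtain ⟨n1, n2, n3⟩ := hc
    have hsub : ({y, z, w} : Set _) ⊆ (Jgraph N).neighborSet v := by
      intro x hx
      rcases hx with rfl | rfl | hx
      · exact h1
      · exact h2
      · rw [Set.mem_singleton_iff] at hx; rw [hx]; exact h3
    have h3' : ({y, z, w} : Set _).ncard = 3 := by
      rw [Set.ncard_insert_of_notMem (by simp [n1, n2]) (Set.toFinite _),
          Set.ncard_insert_of_notMem (by simp [n3]) (Set.toFinite _), Set.ncard_singleton]
    have hle := Set.ncard_le_ncard hsub (Set.toFinite _)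
    have hd := hdeg_le v
    rw [Jdeg] at hd
    omega
  have hsupp_adj : ∀ a b, a ∈ C.supp → (Jgraph N).Adj a b → b ∈ C.supp := by
    intro a b ha hab
    rw [SimpleGraph.ConnectedComponent.mem_supp_iff] at ha ⊢
    rw [← ha]
    exact SimpleGraph.ConnectedComponent.sound hab.symm.reachable
  set Qs : Finset {v : V // Qt N v ∨ Rt N v} :=
    Finset.univ.filter (fun a => a ∈ C.supp ∧ Qt N a.1) with hQs
  set Rs : Finset {v : V // Qt N v ∨ Rt N v} :=
    Finset.univ.filter (fun a => a ∈ C.supp ∧ Rt N a.1) with hRs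
  set E : Finset ({v : V // Qt N v ∨ Rt N v} × {v : V // Qt N v ∨ Rt N v}) :=
    Finset.univ.filter (fun p => p.1 ∈ Qs ∧ p.2 ∈ Rs ∧ (Jgraph N).Adj p.1 p.2) with hE
  have hQsm : ∀ a, a ∈ Qs ↔ a ∈ C.supp ∧ Qt N a.1 := by
    intro a; rw [hQs, Finset.mem_filter]; simp
  have hRsm : ∀ a, a ∈ Rs ↔ a ∈ C.supp ∧ Rt N a.1 := by
    intro a; rw [hRs, Finset.mem_filter]; simp
  have hEm : ∀ p, p ∈ E ↔ p.1 ∈ Qs ∧ p.2 ∈ Rs ∧ (Jgraph N).Adj p.1 p.2 := by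
    intro p; rw [hE, Finset.mem_filter]; simp
  -- first count
  have hcard1 : E.card = ∑ q ∈ Qs, Jdeg N q := by
    rw [Finset.card_eq_sum_card_fiberwise (f := Prod.fst) (fun p hp => ((hEm p).mp hp).1)]
    refine Finset.sum_congr rfl (fun q hq => ?_)
    rw [Jdeg, Set.ncard_eq_toFinset_card']
    refine Finset.card_bij (fun p _ => p.2) ?_ ?_ ?_
    · intro p hp
      rw [Finset.mem_filter] at hp
      obtain ⟨hpE, hpq⟩ := hp
      have hadj := ((hEm p).mp hpE).2.2
      rw [Set.mem_toFinset]
      rw [hpq] at hadj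
      exact hadj
    · intro p1 h1 p2 h2 he
      rw [Finset.mem_filter] at h1 h2
      exact Prod.ext (h1.2.trans h2.2.symm) he
    · intro b hbmem
      rw [Set.mem_toFinset] at hbmem
      have hq' := (hQsm q).mp hq
      have hbrt : Rt N b.1 := ((jadj_iff_of_Qt hq'.2).mp hbmem).2
      have hbsupp : b ∈ C.supp := hsupp_adj q b hq'.1 hbmem
      refine ⟨(q, b), ?_, rfl⟩
      rw [Finset.mem_filter]
      exact ⟨(hEm (q, b)).mpr ⟨hq, (hRsm b).mpr ⟨hbsupp, hbrt⟩, hbmem⟩, rfl⟩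
  -- second count
  have hcard2 : E.card = 2 * Rs.card := by
    rw [Finset.card_eq_sum_card_fiberwise (f := Prod.snd) (fun p hp => ((hEm p).mp hp).2.1)]
    rw [Finset.sum_congr rfl (fun r (hr : r ∈ Rs) => ?_), Finset.sum_const, smul_eq_mul,
      mul_comm]
    have hr' := (hRsm r).mp hr
    have : (E.filter fun p => p.2 = r).card = Jdeg N r := by
      rw [Jdeg, Set.ncard_eq_toFinset_card']
      refine Finset.card_bij (fun p _ => p.1) ?_ ?_ ?_
      · intro p hp
        rw [Finset.mem_filter] at hp
        obtain ⟨hpE, hpr⟩ := hp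
        have hadj := ((hEm p).mp hpE).2.2
        rw [Set.mem_toFinset, SimpleGraph.mem_neighborSet]
        rw [hpr] at hadj
        exact hadj.symm
      · intro p1 h1 p2 h2 he
        rw [Finset.mem_filter] at h1 h2
        exact Prod.ext he (h1.2.trans h2.2.symm)
      · intro b hbmem
        rw [Set.mem_toFinset, SimpleGraph.mem_neighborSet] at hbmem
        have harc : N.Arc b.1 r.1 := (jadj_iff_of_Rt hr'.2).mp hbmem
        have hbQt : Qt N b.1 := ⟨r.1, harc, hr'.2⟩
        have hbsupp : b ∈ C.supp := hsupp_adj r b hr'.1 hbmem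
        refine ⟨(b, r), ?_, rfl⟩
        rw [Finset.mem_filter]
        exact ⟨(hEm (b, r)).mpr ⟨(hQsm b).mpr ⟨hbsupp, hbQt⟩, hr, hbmem.symm⟩, rfl⟩
    rw [this, jdeg_of_Rt hb hr'.2]
  set D1 : Finset {v : V // Qt N v ∨ Rt N v} := Qs.filter (fun q => Jdeg N q = 1) with hD1
  have hsum_split : ∑ q ∈ Qs, Jdeg N q + D1.card = 2 * Qs.card := by
    rw [← Finset.sum_filter_add_sum_filter_not Qs (fun q => Jdeg N q = 1)]
    have e1 : ∑ q ∈ D1, Jdeg N q = D1.card := by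
      rw [Finset.sum_congr rfl (fun q hq => (Finset.mem_filter.mp hq).2), Finset.sum_const,
        smul_eq_mul, mul_one]
    have e2 : ∑ q ∈ Qs.filter (fun q => ¬ Jdeg N q = 1), Jdeg N q =
        2 * (Qs.filter (fun q => ¬ Jdeg N q = 1)).card := by
      rw [Finset.sum_congr rfl (fun q hq => ?_), Finset.sum_const, smul_eq_mul, mul_comm]
      rw [Finset.mem_filter] at hq
      have hQt := ((hQsm q).mp hq.1).2
      have h1 := jdeg_of_Qt_pos hQt
      have h2 := jdeg_of_Qt_le hb hQt
      omega
    have e3 := Finset.card_filter_add_card_filter_not (s := Qs)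
      (p := fun q => Jdeg N q = 1)
    rw [hD1] at *
    omega
  have hEQ : 2 * Rs.card + D1.card = 2 * Qs.card := by
    rw [← hcard2, hcard1]
    exact hsum_split
  -- at most two degree-one vertices
  have hinner : ∀ (a b c : {v : V // Qt N v ∨ Rt N v}) (p : (Jgraph N).Walk a b)
      (q : (Jgraph N).Walk a c), q.IsPath → p.support <+: q.support → b ≠ a → b ≠ c →
      Jdeg N b = 1 → False := by
    intro a b c p q hq hpre hba hbc hdb
    have hbq : b ∈ q.support := hpre.subset p.end_mem_support
    obtain ⟨y, z, hyz, hy, hz⟩ := interior_two_nbrs q hq hbq hba hbc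
    have : 1 < ((Jgraph N).neighborSet b).ncard := by
      rw [Set.one_lt_ncard (Set.toFinite _)]
      exact ⟨y, hy, z, hz, fun e => hyz e⟩
    rw [Jdeg] at hdb
    omega
  have honly : ∀ a b c : {v : V // Qt N v ∨ Rt N v}, a ∈ D1 → b ∈ D1 → c ∈ D1 →
      a ≠ b → a ≠ c → b ≠ c → False := by
    intro a b c ha' hb' hc' hab hac hbc
    have haD := Finset.mem_filter.mp ha'
    have hbD := Finset.mem_filter.mp hb'
    have hcD := Finset.mem_filter.mp hc'
    have hasupp := ((hQsm a).mp haD.1).1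
    have hbsupp := ((hQsm b).mp hbD.1).1
    have hcsupp := ((hQsm c).mp hcD.1).1
    rw [SimpleGraph.ConnectedComponent.mem_supp_iff] at hasupp hbsupp hcsupp
    obtain ⟨wb⟩ := SimpleGraph.ConnectedComponent.exact (hasupp.trans hbsupp.symm)
    obtain ⟨wc⟩ := SimpleGraph.ConnectedComponent.exact (hasupp.trans hcsupp.symm)
    set p := wb.bypass with hp'
    set q := wc.bypass with hq'
    have hp : p.IsPath := wb.bypass_isPath
    have hq : q.IsPath := wc.bypass_isPath
    have hxp : a ∉ p.support.tail := by
      have hnd := hp.support_nodup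
      rw [p.support_eq_cons] at hnd
      exact (List.nodup_cons.mp hnd).1
    have hxq : a ∉ q.support.tail := by
      have hnd := hq.support_nodup
      rw [q.support_eq_cons] at hnd
      exact (List.nodup_cons.mp hnd).1
    have huniq : ∀ y z, (Jgraph N).Adj a y → (Jgraph N).Adj a z → y ≠ a → z ≠ a → y = z := by
      intro y z h1 h2 _ _
      obtain ⟨w, hw⟩ := Set.ncard_eq_one.mp (haD.2 : Jdeg N a = 1)
      have e1 : y ∈ ({w} : Set _) := hw ▸ h1
      have e2 : z ∈ ({w} : Set _) := hw ▸ h2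
      rw [Set.mem_singleton_iff] at e1 e2
      rw [e1, e2]
    rcases walk_prefix hG3 p q a hp hq hxp hxq huniq with h | h
    · exact hinner a b c p q hq h (Ne.symm hab) hbc hbD.2
    · exact hinner a c b q p hp h (Ne.symm hac) (Ne.symm hbc) hcD.2
  have hD1le : D1.card ≤ 2 := by
    by_contra hgt
    push_neg at hgt
    obtain ⟨a, ha, b, hb', c, hc, hab, hac, hbc⟩ := Finset.two_lt_card.mp hgt
    exact honly a b c ha hb' hc hab hac hbc
  have hD1cases : D1.card = 0 ∨ D1.card = 2 := by omega
  rcases hD1cases with h0 | h2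
  · -- cycle case
    left
    intro a ha
    rcases a.2 with hq | hr
    · have haQs : a ∈ Qs := (hQsm a).mpr ⟨ha, hq⟩
      have h1 := jdeg_of_Qt_pos hq
      have h2' := jdeg_of_Qt_le hb hq
      by_contra hne
      have : a ∈ D1 := Finset.mem_filter.mpr ⟨haQs, by omega⟩
      rw [Finset.card_eq_zero.mp h0] at this
      exact absurd this (Finset.notMem_empty a)
    · exact jdeg_of_Rt hb hr
  · -- path case
    right
    obtain ⟨a, b, hab, hD1eq⟩ := Finset.card_eq_two.mp h2
    have haD1 : a ∈ D1 := by rw [hD1eq]; exact Finset.mem_insert_self _ _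
    have hbD1 : b ∈ D1 := by rw [hD1eq]; exact Finset.mem_insert_of_mem (Finset.mem_singleton_self _)
    have haQs := (Finset.mem_filter.mp haD1).1
    have hbQs := (Finset.mem_filter.mp hbD1).1
    have haQt := ((hQsm a).mp haQs).2
    have hbQt := ((hQsm b).mp hbQs).2
    have hasupp := ((hQsm a).mp haQs).1
    have hbsupp := ((hQsm b).mp hbQs).1
    have hadeg := (Finset.mem_filter.mp haD1).2
    have hbdeg := (Finset.mem_filter.mp hbD1).2
    have honly1 : ∀ v ∈ C.supp, Jdeg N v = 1 → v = a ∨ v = b := by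
      intro v hv hdv
      rcases v.2 with hq | hr
      · have : v ∈ D1 := Finset.mem_filter.mpr ⟨(hQsm v).mpr ⟨hv, hq⟩, hdv⟩
        rw [hD1eq] at this
        rcases Finset.mem_insert.mp this with h | h
        · exact Or.inl h
        · exact Or.inr (Finset.mem_singleton.mp h)
      · rw [jdeg_of_Rt hb hr] at hdv; omega
    refine ⟨a, b, hasupp, hbsupp, hab, fun v _ => hdeg_le v, hadeg, hbdeg, honly1,
      qt_not_leaf haQt, qt_not_retic haQt, qt_not_leaf hbQt, qt_not_retic hbQt, ?_⟩
    by_cases hoa : IsOmnian N a.1 <;> by_cases hob : IsOmnian N b.1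
    · -- both omnian: contradiction
      exfalso
      have hallomn : ∀ q ∈ Qs, IsOmnian N q.1 := by
        intro q hq
        have hQt := ((hQsm q).mp hq).2
        have h1 := jdeg_of_Qt_pos hQt
        have h2' := jdeg_of_Qt_le hb hQt
        by_cases hd : Jdeg N q = 1
        · have : q ∈ D1 := Finset.mem_filter.mpr ⟨hq, hd⟩
          rw [hD1eq] at this
          rcases Finset.mem_insert.mp this with rfl | h
          · exact hoa
          · rw [Finset.mem_singleton.mp h]; exact hob
        · exact omnian_of_jdeg_two hb hQt (by omega)
      have hex : ∀ q ∈ Qs, ∃ r : {v : V // Qt N v ∨ Rt N v}, r ∈ Rs ∧ T q.1 r.1 := by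
        intro q hq
        obtain ⟨r, hrRt, harc, hTr⟩ :=
          omnian_T_arc hT ((hQsm q).mp hq).2 (hallomn q hq)
        refine ⟨⟨r, Or.inr hrRt⟩, ?_, hTr⟩
        refine (hRsm _).mpr ⟨?_, hrRt⟩
        exact hsupp_adj q _ ((hQsm q).mp hq).1 (Or.inl ⟨((hQsm q).mp hq).2, hrRt, harc⟩)
      choose f hf1 hf2 using hex
      set g : {v : V // Qt N v ∨ Rt N v} → {v : V // Qt N v ∨ Rt N v} :=
        fun q => if h : q ∈ Qs then f q h else q with hg
      have hcardle : Qs.card ≤ Rs.card := by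
        refine Finset.card_le_card_of_injOn g (fun q hq => ?_) ?_
        · rw [hg]; rw [Finset.mem_coe] at hq ⊢; simp only [dif_pos hq]; exact hf1 q hq
        · intro q1 h1 q2 h2 he
          rw [Finset.mem_coe] at h1 h2
          rw [hg] at he
          simp only [dif_pos h1, dif_pos h2] at he
          have hT1 : T q1.1 (f q1 h1).1 := hf2 q1 h1
          have hT2 : T q2.1 (f q2 h2).1 := hf2 q2 h2
          rw [he] at hT1
          have hrRt : Rt N (f q2 h2).1 := ((hRsm _).mp (hf1 q2 h2)).2
          have := T_parent_unique hT (retic_ne_root hrRt.1) hT1 hT2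
          exact Subtype.ext this
      omega
    · exact Or.inr (Or.inl ⟨hoa, hob⟩)
    · exact Or.inr (Or.inr ⟨hoa, hob⟩)
    · exact Or.inl ⟨hoa, hob⟩
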